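/- arXiv:1904.11030 — 2 statements merged into one kernel-verified Lean document; each statement's English description precedes it below -/
import Mathlib

section
/- Let Y₁,...,Yₙ be i.i.d. Binomial(2N, 1/(2N)) random variables. For every a > 1/2 there exists c > 0 (independent of n and N) such that P(∑_{i=1}^n (Yᵢ - 1) ≥ n^a) ≤ exp(-c · n^{min(a, 2a-1)}) for all n sufficiently large. -/
open MeasureTheory ProbabilityTheory

lemma integral_comp_nat {Ω : Type} [MeasurableSpace Ω] (μ : Measure Ω) [IsProbabilityMeasure μ]
    (Y : Ω → ℕ) (hY : Measurable Y) (M : ℕ)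
    (hfull : ∑ k ∈ Finset.range M, (μ {ω | Y ω = k}).toReal = 1)
    (g : ℕ → ℝ) :
    Integrable (fun ω => g (Y ω)) μ ∧
    ∫ ω, g (Y ω) ∂μ = ∑ k ∈ Finset.range M, g k * (μ {ω | Y ω = k}).toReal := by
  have hA : ∀ k : ℕ, MeasurableSet {ω | Y ω = k} := fun k => hY (measurableSet_singleton k)
  set h : Ω → ℝ := fun ω => ∑ k ∈ Finset.range M, ({ω | Y ω = k}).indicator (fun _ => g k) ω
    with hh
  -- the union has full measure
  have hdisj : (Finset.range M : Set ℕ).PairwiseDisjoint (fun k => {ω | Y ω = k}) := by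
    intro i _ j _ hij
    refine Set.disjoint_left.mpr ?_
    intro ω hi hj
    exact hij (hi.symm.trans hj)
  have hUnion : μ (⋃ k ∈ Finset.range M, {ω | Y ω = k}) = 1 := by
    rw [measure_biUnion_finset hdisj fun k _ => hA k]
    have : ∀ k ∈ Finset.range M, μ {ω | Y ω = k} ≠ ⊤ := fun k _ => measure_ne_top μ _
    rw [← ENNReal.ofReal_one, ← hfull, ENNReal.ofReal_sum_of_nonneg
      (fun k _ => ENNReal.toReal_nonneg)]
    exact Finset.sum_congr rfl fun k hk => (ENNReal.ofReal_toReal (this k hk)).symm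
  have hae : ∀ᵐ ω ∂μ, g (Y ω) = h ω := by
    have hnull : μ ((⋃ k ∈ Finset.range M, {ω | Y ω = k})ᶜ) = 0 := by
      rw [prob_compl_eq_zero_iff ((Finset.range M).measurableSet_biUnion
        (fun k _ => hA k))]
      exact hUnion
    have hmem : ∀ᵐ ω ∂μ, ω ∈ ⋃ k ∈ Finset.range M, {ω | Y ω = k} :=
      MeasureTheory.mem_ae_iff.mpr hnull
    filter_upwards [hmem] with ω hω
    simp only [Set.mem_iUnion, Set.mem_setOf_eq] at hω
    obtain ⟨k, hk, hYk⟩ := hω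
    simp only [hh, Set.indicator_apply, Set.mem_setOf_eq, hYk]
    rw [Finset.sum_ite_eq (Finset.range M) k (fun k => g k)]
    simp [hk]
  have hint : Integrable h μ := by
    apply integrable_finset_sum
    intro k _
    exact (integrable_const (g k)).indicator (hA k)
  constructor
  · exact hint.congr (Filter.EventuallyEq.symm hae)
  · rw [integral_congr_ae hae, hh, integral_finset_sum _
      (fun k _ => (integrable_const (g k)).indicator (hA k))]
    refine Finset.sum_congr rfl fun k _ => ?_
    rw [integral_indicator_const _ (hA k), smul_eq_mul, mul_comm, measureReal_def]

lemma pk_nonneg (N k : ℕ) (hN : 1 ≤ N) :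
    0 ≤ ((Nat.choose (2 * N) k : ℝ) * (1 / (2 * (N : ℝ))) ^ k
      * (1 - 1 / (2 * (N : ℝ))) ^ (2 * N - k)) := by
  have hN' : (1:ℝ) ≤ N := by exact_mod_cast hN
  have h1 : (0:ℝ) ≤ 1 / (2 * (N : ℝ)) := by positivity
  have h2 : 1 / (2 * (N : ℝ)) ≤ 1 := by
    rw [div_le_one (by linarith)]; linarith
  have h3 : (0:ℝ) ≤ 1 - 1 / (2 * (N : ℝ)) := by linarith
  positivity

lemma pk_sum (N : ℕ) (hN : 1 ≤ N) :
    ∑ k ∈ Finset.range (2 * N + 1),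
      ((Nat.choose (2 * N) k : ℝ) * (1 / (2 * (N : ℝ))) ^ k
        * (1 - 1 / (2 * (N : ℝ))) ^ (2 * N - k)) = 1 := by
  have := add_pow (1 / (2 * (N : ℝ))) (1 - 1 / (2 * (N : ℝ))) (2 * N)
  have h0 : (1 / (2 * (N : ℝ))) + (1 - 1 / (2 * (N : ℝ))) = 1 := by ring
  rw [h0, one_pow] at this
  refine Eq.trans ?_ this.symm
  exact Finset.sum_congr rfl fun k _ => by ring
lemma mgf_binom_le {Ω : Type} [MeasurableSpace Ω] (μ : Measure Ω) [IsProbabilityMeasure μ]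
    (Y : Ω → ℕ) (hY : Measurable Y) (N : ℕ) (hN : 1 ≤ N)
    (hpmf : ∀ k, μ {ω | Y ω = k} =
      ENNReal.ofReal ((Nat.choose (2 * N) k : ℝ)
        * (1 / (2 * (N : ℝ))) ^ k * (1 - 1 / (2 * (N : ℝ))) ^ (2 * N - k)))
    (t : ℝ) (ht : 0 ≤ t) :
    Integrable (fun ω => Real.exp (t * ((Y ω : ℝ) - 1))) μ ∧
      mgf (fun ω => (Y ω : ℝ) - 1) μ t ≤ Real.exp (Real.exp t - 1 - t) := by
  set p := 1 / (2 * (N : ℝ)) with hp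
  have hp0 : 0 ≤ p := by positivity
  have htoReal : ∀ k, (μ {ω | Y ω = k}).toReal
      = (Nat.choose (2 * N) k : ℝ) * p ^ k * (1 - p) ^ (2 * N - k) := fun k => by
    rw [hpmf k, ENNReal.toReal_ofReal (pk_nonneg N k hN)]
  have hfull : ∑ k ∈ Finset.range (2 * N + 1), (μ {ω | Y ω = k}).toReal = 1 := by
    simp_rw [htoReal]; exact pk_sum N hN
  obtain ⟨hint, heq⟩ := integral_comp_nat μ Y hY (2 * N + 1) hfull
      (fun k => Real.exp (t * ((k : ℝ) - 1)))
  refine ⟨hint, ?_⟩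
  have hmgf : mgf (fun ω => (Y ω : ℝ) - 1) μ t
      = ∑ k ∈ Finset.range (2 * N + 1), Real.exp (t * ((k : ℝ) - 1))
          * (μ {ω | Y ω = k}).toReal := heq
  rw [hmgf]
  have key : ∑ k ∈ Finset.range (2 * N + 1), Real.exp (t * ((k : ℝ) - 1))
        * (μ {ω | Y ω = k}).toReal
      = Real.exp (-t) * (p * Real.exp t + (1 - p)) ^ (2 * N) := by
    rw [add_pow, Finset.mul_sum]
    refine Finset.sum_congr rfl fun k _ => ?_
    rw [htoReal k, show t * ((k : ℝ) - 1) = (k : ℝ) * t - t by ring, Real.exp_sub,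
      Real.exp_nat_mul, Real.exp_neg, mul_pow]
    ring
  rw [key]
  have hx0 : 0 ≤ Real.exp t - 1 := by
    have := Real.one_le_exp ht; linarith
  have hbase : p * Real.exp t + (1 - p) = 1 + p * (Real.exp t - 1) := by ring
  have hbase0 : 0 ≤ 1 + p * (Real.exp t - 1) := by positivity
  have hle : (p * Real.exp t + (1 - p)) ^ (2 * N) ≤ Real.exp (Real.exp t - 1) := by
    rw [hbase]
    calc (1 + p * (Real.exp t - 1)) ^ (2 * N)
        ≤ Real.exp (p * (Real.exp t - 1)) ^ (2 * N) := by
          apply pow_le_pow_left₀ hbase0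
          have := Real.add_one_le_exp (p * (Real.exp t - 1))
          linarith
      _ = Real.exp ((2 * N : ℕ) * (p * (Real.exp t - 1))) := by
          rw [Real.exp_nat_mul]
      _ = Real.exp (Real.exp t - 1) := by
          congr 1
          have hN0 : (2 * (N : ℝ)) ≠ 0 := by
            have : (1:ℝ) ≤ N := by exact_mod_cast hN
            positivity
          rw [hp]
          push_cast
          field_simp
  calc Real.exp (-t) * (p * Real.exp t + (1 - p)) ^ (2 * N)
      ≤ Real.exp (-t) * Real.exp (Real.exp t - 1) := by
        apply mul_le_mul_of_nonneg_left hle (Real.exp_nonneg _)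
    _ = Real.exp (Real.exp t - 1 - t) := by
        rw [← Real.exp_add]; ring_nf
lemma exp_taylor_le {t : ℝ} (ht0 : 0 ≤ t) (ht1 : t ≤ 1) :
    Real.exp t - 1 - t ≤ t ^ 2 := by
  have habs : |t| ≤ 1 := by rw [abs_of_nonneg ht0]; exact ht1
  have h := Real.exp_bound habs (by norm_num : 0 < 2)
  have hsum : ∑ i ∈ Finset.range 2, t ^ i / (Nat.factorial i : ℝ) = 1 + t := by
    simp [Finset.sum_range_succ, Nat.factorial]
  rw [hsum, abs_of_nonneg ht0] at h
  have h2 : Real.exp t - (1 + t) ≤ t ^ 2 * ((2 + 1 : ℕ) / ((Nat.factorial 2 : ℕ) * 2)) :=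
    (le_abs_self _).trans h
  have : ((2 + 1 : ℕ) : ℝ) / ((Nat.factorial 2 : ℕ) * 2) = 3 / 4 := by
    norm_num [Nat.factorial]
  rw [this] at h2
  nlinarith [sq_nonneg t]

lemma exponent_ineq (a : ℝ) (ha : 1 / 2 < a) (n : ℕ) (hn : 1 ≤ n) :
    (n : ℝ) * (Real.exp ((1/2) * (n:ℝ) ^ (min a (2*a-1) - a)) - 1
        - (1/2) * (n:ℝ) ^ (min a (2*a-1) - a))
      + (-((1/2) * (n:ℝ) ^ (min a (2*a-1) - a))) * (n:ℝ) ^ a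
      ≤ -(1/4) * (n:ℝ) ^ (min a (2*a-1)) := by
  have hn1 : (1:ℝ) ≤ (n:ℝ) := by exact_mod_cast hn
  have hn0 : (0:ℝ) < (n:ℝ) := by linarith
  set m := min a (2*a-1) with hm
  set t := (1/2) * (n:ℝ) ^ (m - a) with htdef
  have hma : m - a ≤ 0 := by
    have : m ≤ a := min_le_left _ _
    linarith
  have hr1 : (n:ℝ) ^ (m - a) ≤ 1 := Real.rpow_le_one_of_one_le_of_nonpos hn1 hma
  have hr0 : 0 < (n:ℝ) ^ (m - a) := Real.rpow_pos_of_pos hn0 _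
  have ht0 : 0 ≤ t := by positivity
  have ht1 : t ≤ 1 := by rw [htdef]; linarith
  have htaylor := exp_taylor_le ht0 ht1
  have hmul : t * (n:ℝ) ^ a = (1/2) * (n:ℝ) ^ m := by
    rw [htdef, mul_assoc, ← Real.rpow_add hn0, sub_add_cancel]
  have hsq : (n:ℝ) * t ^ 2 = (1/4) * (n:ℝ) ^ (1 + ((m-a) + (m-a))) := by
    rw [htdef, Real.rpow_add hn0, Real.rpow_add hn0, Real.rpow_one]
    ring
  have step1 : (n:ℝ) * (Real.exp t - 1 - t) + (-t) * (n:ℝ) ^ a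
      ≤ (n:ℝ) * t ^ 2 - (1/2) * (n:ℝ) ^ m := by
    have := mul_le_mul_of_nonneg_left htaylor (le_of_lt hn0)
    rw [neg_mul, hmul]
    linarith
  refine step1.trans ?_
  rcases le_total a 1 with hle | hle
  · have hmeq : m = 2*a - 1 := min_eq_right (by linarith)
    have hexp : 1 + ((m - a) + (m - a)) = m := by rw [hmeq]; ring
    rw [hsq, hexp]
    have hpos : 0 ≤ (n:ℝ) ^ m := (Real.rpow_pos_of_pos hn0 _).le
    linarith
  · have hmeq : m = a := min_eq_left (by linarith)
    have hz : m - a = 0 := by rw [hmeq]; ring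
    have hnle : (n:ℝ) ≤ (n:ℝ) ^ a := by
      have := Real.rpow_le_rpow_of_exponent_le hn1 (by linarith : (1:ℝ) ≤ a)
      rwa [Real.rpow_one] at this
    have ht : t = 1/2 := by rw [htdef, hz, Real.rpow_zero]; ring
    rw [hmeq, ht] at *
    nlinarith [Real.rpow_pos_of_pos hn0 a]
/-- Large deviations for i.i.d. `Binomial(2N, 1/(2N))` variables: for every
`a > 1/2` there is `c > 0`, independent of `n` and `N`, with
`P(∑_{i<n} (Yᵢ - 1) ≥ n^a) ≤ exp(-c n^{min(a, 2a-1)})` for all large `n`. -/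
theorem binomial_sum_large_deviation :
    ∀ a : ℝ, 1 / 2 < a →
    ∃ c : ℝ, 0 < c ∧ ∃ n₀ : ℕ, ∀ (N : ℕ), 1 ≤ N →
    ∀ (Ω : Type) (m0 : MeasurableSpace Ω) (μ : Measure Ω), IsProbabilityMeasure μ →
    ∀ Y : ℕ → Ω → ℕ, (∀ i, Measurable (Y i)) →
    iIndepFun Y μ →
    (∀ i k, μ {ω | Y i ω = k} =
      ENNReal.ofReal ((Nat.choose (2 * N) k : ℝ)
        * (1 / (2 * (N : ℝ))) ^ k * (1 - 1 / (2 * (N : ℝ))) ^ (2 * N - k))) →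
    ∀ n : ℕ, n₀ ≤ n →
      μ {ω | (n : ℝ) ^ a ≤ ∑ i ∈ Finset.range n, ((Y i ω : ℝ) - 1)}
        ≤ ENNReal.ofReal (Real.exp (-c * (n : ℝ) ^ min a (2 * a - 1))) := by
  intro a ha
  refine ⟨1/4, by norm_num, 1, ?_⟩
  intro N hN Ω m0 μ hμ Y hYmeas hindep hpmf n hn
  set X : ℕ → Ω → ℝ := fun i ω => (Y i ω : ℝ) - 1 with hX
  have hXmeas : ∀ i, Measurable (X i) := fun i =>
    (measurable_from_top.comp (hYmeas i)).sub measurable_const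
  have hindepX : iIndepFun X μ :=
    hindep.comp (fun _ (k : ℕ) => (k : ℝ) - 1) (fun _ => measurable_from_top)
  set t : ℝ := (1/2) * (n:ℝ) ^ (min a (2*a-1) - a) with htdef
  have hn1 : (1:ℝ) ≤ (n:ℝ) := by exact_mod_cast hn
  have hn0 : (0:ℝ) < (n:ℝ) := by linarith
  have ht0 : 0 ≤ t := by positivity
  have hInt : ∀ i, Integrable (fun ω => Real.exp (t * X i ω)) μ := fun i =>
    (mgf_binom_le μ (Y i) (hYmeas i) N hN (hpmf i) t ht0).1
  have hSint : Integrable (fun ω => Real.exp (t * (∑ i ∈ Finset.range n, X i) ω)) μ :=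
    hindepX.integrable_exp_mul_sum hXmeas (fun i _ => hInt i)
  have hchern := measure_ge_le_exp_mul_mgf ((n:ℝ) ^ a) ht0 hSint
  have hset : {ω | (n : ℝ) ^ a ≤ ∑ i ∈ Finset.range n, ((Y i ω : ℝ) - 1)}
      = {ω | (n : ℝ) ^ a ≤ (∑ i ∈ Finset.range n, X i) ω} := by
    ext ω; simp [hX, Finset.sum_apply]
  have hmgfS : mgf (∑ i ∈ Finset.range n, X i) μ t
      ≤ Real.exp ((n:ℝ) * (Real.exp t - 1 - t)) := by
    rw [hindepX.mgf_sum hXmeas]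
    calc ∏ i ∈ Finset.range n, mgf (X i) μ t
        ≤ ∏ i ∈ Finset.range n, Real.exp (Real.exp t - 1 - t) :=
          Finset.prod_le_prod (fun i _ => mgf_nonneg)
            (fun i _ => (mgf_binom_le μ (Y i) (hYmeas i) N hN (hpmf i) t ht0).2)
      _ = Real.exp (Real.exp t - 1 - t) ^ n := by rw [Finset.prod_const, Finset.card_range]
      _ = Real.exp ((n:ℝ) * (Real.exp t - 1 - t)) := (Real.exp_nat_mul _ n).symm
  have hfinal : (μ {ω | (n : ℝ) ^ a ≤ (∑ i ∈ Finset.range n, X i) ω}).toReal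
      ≤ Real.exp (-(1/4) * (n:ℝ) ^ min a (2*a-1)) := by
    refine hchern.trans ?_
    calc Real.exp (-t * (n:ℝ) ^ a) * mgf (∑ i ∈ Finset.range n, X i) μ t
        ≤ Real.exp (-t * (n:ℝ) ^ a) * Real.exp ((n:ℝ) * (Real.exp t - 1 - t)) :=
          mul_le_mul_of_nonneg_left hmgfS (Real.exp_nonneg _)
      _ = Real.exp ((n:ℝ) * (Real.exp t - 1 - t) + (-t) * (n:ℝ) ^ a) := by
          rw [← Real.exp_add]; ring_nf
      _ ≤ Real.exp (-(1/4) * (n:ℝ) ^ min a (2*a-1)) := by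
          apply Real.exp_le_exp.mpr
          exact exponent_ineq a ha n hn
  rw [hset]
  calc μ {ω | (n : ℝ) ^ a ≤ (∑ i ∈ Finset.range n, X i) ω}
      = ENNReal.ofReal ((μ {ω | (n : ℝ) ^ a ≤ (∑ i ∈ Finset.range n, X i) ω}).toReal) :=
        (ENNReal.ofReal_toReal (measure_ne_top _ _)).symm
    _ ≤ ENNReal.ofReal (Real.exp (-(1/4) * (n:ℝ) ^ min a (2*a-1))) :=
        ENNReal.ofReal_le_ofReal hfinal
end

section
/- Let {X̃ₙ}_{n≥0} be the critical binomial branching process started from X̃₀ = 1 with offspring distribution Binomial(2N, 1/(2N)), and let T̃_k = inf{n : X̃ₙ ≥ 2^k or ∑_{i=1}^n X̃ᵢ ≥ 2^{2k}}. Then there exists a universal constant C (independent of N) such that P(T̃_k < ∞) ≤ C · 2^{-k} for all k ∈ ℕ. -/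
open MeasureTheory ProbabilityTheory
open scoped ENNReal NNReal

/-- Third-order lower bound for `(1-t)^m`. -/
lemma gw_binom_lower (m : ℕ) : ∀ t : ℝ, 0 ≤ t → t ≤ 1 →
    1 - m*t + (m*(m-1)/2)*t^2 - (m*(m-1)*(m-2)/6)*t^3 ≤ (1-t)^m := by
  induction m with
  | zero => intro t h0 h1; norm_num
  | succ m ih =>
    intro t h0 h1
    have h := ih t h0 h1
    have h1t : (0:ℝ) ≤ 1 - t := by linarith
    have hstep : (1-t) * (1 - m*t + (m*(m-1)/2)*t^2 - (m*(m-1)*(m-2)/6)*t^3)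
        ≤ (1-t)^(m+1) := by
      rw [pow_succ (1-t) m, mul_comm ((1-t)^m) (1-t)]
      exact mul_le_mul_of_nonneg_left h h1t
    have hm3 : (0:ℝ) ≤ (m:ℝ)*((m:ℝ)-1)*((m:ℝ)-2) := by
      rcases m with _ | _ | m
      · norm_num
      · norm_num
      · have hm : (0:ℝ) ≤ (m:ℝ) := by positivity
        push_cast
        have he : ((m:ℝ)+1+1) * ((m:ℝ)+1+1-1) * ((m:ℝ)+1+1-2) = ((m:ℝ)+2)*((m:ℝ)+1)*(m:ℝ) := by ring
        rw [he]; positivity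
    have ht4 : (0:ℝ) ≤ t^4 := by positivity
    push_cast
    nlinarith [hstep, mul_nonneg hm3 ht4]

noncomputable def gwphi (N : ℕ) (s : ℝ) : ℝ :=
  (1 - 1/(2*(N:ℝ)) + s * (1/(2*(N:ℝ))))^(2*N)

lemma gwphi_mem (N : ℕ) (hN : 1 ≤ N) {s : ℝ} (h0 : 0 ≤ s) (h1 : s ≤ 1) :
    0 ≤ gwphi N s ∧ gwphi N s ≤ 1 := by
  have hN' : (1:ℝ) ≤ N := by exact_mod_cast hN
  have hp0 : (0:ℝ) < 1/(2*(N:ℝ)) := by positivity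
  have hp1 : 1/(2*(N:ℝ)) ≤ 1 := by
    rw [div_le_one (by positivity)]; linarith
  have hb0 : 0 ≤ 1 - 1/(2*(N:ℝ)) + s * (1/(2*(N:ℝ))) := by nlinarith
  have hb1 : 1 - 1/(2*(N:ℝ)) + s * (1/(2*(N:ℝ))) ≤ 1 := by nlinarith
  constructor
  · exact pow_nonneg hb0 _
  · exact pow_le_one₀ hb0 hb1

set_option maxHeartbeats 1000000 in
/-- Survival-probability recursion bound: `1 - gwphi^[n] 0 ≤ 12/(n+12)`. -/
lemma gwphi_iter_bound (N : ℕ) (hN : 1 ≤ N) (n : ℕ) :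
    0 ≤ (gwphi N)^[n] 0 ∧ (gwphi N)^[n] 0 ≤ 1 ∧ 1 - (gwphi N)^[n] 0 ≤ 12/(n+12) := by
  have hN' : (1:ℝ) ≤ N := by exact_mod_cast hN
  induction n with
  | zero => norm_num
  | succ n ih =>
    obtain ⟨h0, h1, hb⟩ := ih
    rw [Function.iterate_succ_apply' (gwphi N) n 0]
    set w := (gwphi N)^[n] 0 with hw
    clear_value w
    have hmem := gwphi_mem N hN h0 h1
    set u : ℝ := 1 - w with hu
    clear_value u
    have hu0 : 0 ≤ u := by rw [hu]; linarith
    have hu1 : u ≤ 1 := by rw [hu]; linarith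
    have hkey : 1 - u + u^2/12 ≤ gwphi N w := by
      have ht0 : 0 ≤ u * (1/(2*(N:ℝ))) := by positivity
      have ht1 : u * (1/(2*(N:ℝ))) ≤ 1 := by
        have : 1/(2*(N:ℝ)) ≤ 1 := by
          rw [div_le_one (by positivity)]; linarith
        nlinarith
      have hlow := gw_binom_lower (2*N) (u * (1/(2*(N:ℝ)))) ht0 ht1
      have harg : (1 : ℝ) - u * (1/(2*(N:ℝ))) = 1 - 1/(2*(N:ℝ)) + w * (1/(2*(N:ℝ))) := by
        rw [hu]; ring
      rw [harg] at hlow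
      unfold gwphi
      refine le_trans ?_ hlow
      have hM : ((2*N : ℕ) : ℝ) = 2*(N:ℝ) := by push_cast; ring
      rw [hM]
      have hNpos : (0:ℝ) < (N:ℝ) := by linarith
      have e1 : 2*(N:ℝ) * (u * (1/(2*(N:ℝ)))) = u := by field_simp
      have e2 : 2*(N:ℝ)*(2*(N:ℝ)-1)/2 * (u * (1/(2*(N:ℝ))))^2 = (2*(N:ℝ)-1)/(4*(N:ℝ)) * u^2 := by
        field_simp; ring
      have e3 : 2*(N:ℝ)*(2*(N:ℝ)-1)*(2*(N:ℝ)-2)/6 * (u * (1/(2*(N:ℝ))))^3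
          = (2*(N:ℝ)-1)*(2*(N:ℝ)-2)/(24*(N:ℝ)^2) * u^3 := by
        field_simp; ring
      rw [e1, e2, e3]
      have c2 : (1:ℝ)/4 ≤ (2*(N:ℝ)-1)/(4*(N:ℝ)) := by
        rw [div_le_div_iff₀ (by norm_num) (by positivity)]; nlinarith
      have c3 : (2*(N:ℝ)-1)*(2*(N:ℝ)-2)/(24*(N:ℝ)^2) ≤ 1/6 := by
        rw [div_le_div_iff₀ (by positivity) (by norm_num)]; nlinarith
      have hu3 : u^3 ≤ u^2 := by nlinarith
      have hu2 : (0:ℝ) ≤ u^2 := by positivity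
      have hu3' : (0:ℝ) ≤ u^3 := by positivity
      nlinarith [mul_le_mul_of_nonneg_right c2 hu2, mul_le_mul_of_nonneg_right c3 hu3',
        mul_le_mul_of_nonneg_left hu3 (le_trans (by norm_num) c2)]
    refine ⟨hmem.1, hmem.2, ?_⟩
    have h2 : 1 - gwphi N w ≤ u - u^2/12 := by linarith
    have hB : u ≤ 12/((n:ℝ)+12) := hb
    have hBpos : (0:ℝ) < (n:ℝ)+12 := by positivity
    have hB' : u * ((n:ℝ)+12) ≤ 12 := by
      rw [← le_div_iff₀ hBpos]; exact hB
    have target : u - u^2/12 ≤ 12/((n:ℝ)+1+12) := by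
      rw [le_div_iff₀ (by positivity)]
      have expand : 12*(12 - (u - u^2/12) * ((n:ℝ)+1+12))
          = (12 - u*((n:ℝ)+12))*(12-u) + u^2 := by ring
      have hprod := mul_nonneg (by linarith : (0:ℝ) ≤ 12 - u*((n:ℝ)+12))
        (by linarith : (0:ℝ) ≤ 12 - u)
      nlinarith [sq_nonneg u]
    push_cast
    linarith

/-- Binomial pgf identity. -/
lemma gw_pgf_sum (n : ℕ) (x y s : ℝ) :
    ∑ j ∈ Finset.range (n+1), ((n.choose j : ℝ) * x^j * y^(n-j)) * s^j
      = (y + s*x)^n := by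
  rw [add_comm y (s*x), add_pow]
  apply Finset.sum_congr rfl
  intro j hj
  rw [mul_pow]
  ring

/-- Binomial mean identity. -/
lemma gw_mean_sum (m : ℕ) (x y : ℝ) :
    ∑ j ∈ Finset.range (m+1+1), (j : ℝ) * ((m+1).choose j * x^j * y^(m+1-j))
      = (m+1) * x * (x+y)^m := by
  rw [Finset.sum_range_succ']
  simp only [Nat.cast_zero, zero_mul, add_zero]
  have hterm : ∀ i : ℕ, ((i+1 : ℕ) : ℝ) * (((m+1).choose (i+1) : ℝ) * x^(i+1) * y^(m+1-(i+1)))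
      = (m+1) * x * ((m.choose i : ℝ) * x^i * y^(m-i)) := by
    intro i
    have hc : (((m+1).choose (i+1) : ℕ) : ℝ) * ((i:ℝ)+1) = ((m:ℝ)+1) * (m.choose i : ℝ) := by
      have h := Nat.add_one_mul_choose_eq m i
      have h2 : ((Nat.succ m * m.choose i : ℕ) : ℝ) = (((m+1).choose (i+1) * (i+1) : ℕ) : ℝ) := by
        exact_mod_cast congrArg (Nat.cast (R := ℝ)) h
      push_cast at h2
      linarith
    have hsub : m + 1 - (i + 1) = m - i := by omega
    rw [hsub, pow_succ]
    push_cast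
    linear_combination (x^i * x * y^(m-i)) * hc
  calc ∑ i ∈ Finset.range (m+1), ((i+1:ℕ):ℝ) * (((m+1).choose (i+1):ℝ) * x^(i+1) * y^(m+1-(i+1)))
      = ∑ i ∈ Finset.range (m+1), (m+1) * x * ((m.choose i : ℝ) * x^i * y^(m-i)) := by
        apply Finset.sum_congr rfl; intro i _; exact hterm i
    _ = (m+1) * x * ∑ i ∈ Finset.range (m+1), ((m.choose i : ℝ) * x^i * y^(m-i)) := by
        rw [Finset.mul_sum]
    _ = (m+1) * x * (x+y)^m := by
        rw [add_pow]
        congr 1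
        apply Finset.sum_congr rfl
        intro j hj
        ring

/-- For the critical binomial Galton–Watson process started from one individual,
with `T̃_k = inf{n : X̃ₙ ≥ 2^k or ∑_{i=1}^n X̃ᵢ ≥ 2^{2k}}`, there is a universal
constant `C` (independent of `N`) such that `P(T̃_k < ∞) ≤ C 2^{-k}` for all `k`. -/
theorem gw_binomial_Tk_bound :
    ∃ C : ℝ, 0 < C ∧
    ∀ (N : ℕ), 1 ≤ N →
    ∀ (Ω : Type) (m0 : MeasurableSpace Ω) (μ : Measure Ω), IsProbabilityMeasure μ →
    ∀ (X : ℕ → Ω → ℕ) (Y : ℕ → ℕ → Ω → ℕ),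
    (∀ n, Measurable (X n)) → (∀ n i, Measurable (Y n i)) →
    ∀ ℱ : Filtration ℕ m0,
    (∀ n, ℱ n = ⨆ i ∈ Finset.range (n + 1), MeasurableSpace.comap (X i) ⊤) →
    (∀ ω, X 0 ω = 1) →
    (∀ n ω, X (n + 1) ω = ∑ i ∈ Finset.range (X n ω), Y (n + 1) i ω) →
    (∀ n, iIndepFun (Y (n + 1)) μ) →
    (∀ n i k, μ {ω | Y (n + 1) i ω = k} =
      ENNReal.ofReal ((Nat.choose (2 * N) k : ℝ)
        * (1 / (2 * (N : ℝ))) ^ k * (1 - 1 / (2 * (N : ℝ))) ^ (2 * N - k))) →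
    (∀ n, Indep
      (MeasurableSpace.comap (fun ω (i : ℕ) => Y (n + 1) i ω) MeasurableSpace.pi)
      (ℱ n) μ) →
    ∀ k : ℕ,
      μ {ω | ∃ n : ℕ, 2 ^ k ≤ X n ω ∨
          2 ^ (2 * k) ≤ ∑ i ∈ Finset.Icc 1 n, X i ω}
        ≤ ENNReal.ofReal (C * 2 ^ (-(k : ℝ))) := by
  refine ⟨13, by norm_num, ?_⟩
  intro N hN Ω m0 μ hprob X Y hX hYm ℱ hℱ hX0 hrec hiid hpmf hindep k
  have hNR : (1:ℝ) ≤ (N:ℝ) := by exact_mod_cast hN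
  have hNpos : (0:ℝ) < (N:ℝ) := by linarith
  set p : ℝ := 1 / (2 * (N:ℝ)) with hp
  have hp0 : 0 < p := by rw [hp]; positivity
  have hp1 : p ≤ 1 := by rw [hp, div_le_one (by positivity)]; linarith
  have h1p : 0 ≤ 1 - p := by linarith
  -- membership of X-preimages in the filtration
  have hXF : ∀ i n : ℕ, i ≤ n → ∀ s : Set ℕ, MeasurableSet[ℱ n] (X i ⁻¹' s) := by
    intro i n hin s
    rw [hℱ n]
    have h1 : MeasurableSet[MeasurableSpace.comap (X i) ⊤] (X i ⁻¹' s) := ⟨s, trivial, rfl⟩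
    exact (le_iSup₂ (f := fun (i : ℕ) (_ : i ∈ Finset.range (n+1)) =>
      MeasurableSpace.comap (X i) ⊤) i (Finset.mem_range.2 (Nat.lt_succ_of_le hin))) _ h1
  -- (V): lintegral of a function of a ℕ-valued rv
  have hV : ∀ (W : Ω → ℕ), Measurable W → ∀ (A : Set Ω), MeasurableSet A →
      ∀ h : ℕ → ℝ≥0∞,
      ∫⁻ ω in A, h (W ω) ∂μ = ∑' m : ℕ, μ (A ∩ W ⁻¹' {m}) * h m := by
    intro W hW A hA h
    have h1 : ∫⁻ ω in A, h (W ω) ∂μ = ∫⁻ j, h j ∂((μ.restrict A).map W) :=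
      (lintegral_map measurable_from_top hW).symm
    rw [h1, lintegral_countable' h]
    refine tsum_congr fun m => ?_
    rw [Measure.map_apply hW (measurableSet_singleton m),
      Measure.restrict_apply (hW (measurableSet_singleton m)), Set.inter_comm, mul_comm]
  -- (M): master decomposition lemma
  have hM : ∀ (n : ℕ) (A : Set Ω), MeasurableSet[ℱ n] A →
      ∀ g : ℕ → (ℕ → ℕ) → ℝ≥0∞, (∀ m, Measurable (g m)) →
      ∫⁻ ω in A, g (X n ω) (fun i => Y (n+1) i ω) ∂μ
        = ∑' m : ℕ, μ (A ∩ X n ⁻¹' {m}) * ∫⁻ ω, g m (fun i => Y (n+1) i ω) ∂μ := by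
    intro n A hA g hg
    have hAm : MeasurableSet A := ℱ.le n A hA
    set Z : Ω → ℕ → ℕ := fun ω i => Y (n+1) i ω with hZdef
    have hZm : Measurable Z := measurable_pi_lambda _ (fun i => hYm (n+1) i)
    have hBm0 : ∀ m : ℕ, MeasurableSet (A ∩ X n ⁻¹' {m}) := fun m =>
      hAm.inter (hX n (measurableSet_singleton m))
    have hBF : ∀ m : ℕ, MeasurableSet[ℱ n] (A ∩ X n ⁻¹' {m}) := fun m =>
      MeasurableSet.inter hA (hXF n n le_rfl {m})
    have hcover : A = ⋃ m, A ∩ X n ⁻¹' {m} := by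
      ext ω; simp
    have hdisj : Pairwise (Function.onFun Disjoint fun m => A ∩ X n ⁻¹' {m}) := by
      intro i j hij
      simp only [Function.onFun]
      rw [Set.disjoint_left]
      rintro ω ⟨-, h1⟩ ⟨-, h2⟩
      exact hij ((Set.mem_singleton_iff.1 h1).symm.trans (Set.mem_singleton_iff.1 h2))
    conv_lhs => rw [hcover]
    rw [lintegral_iUnion hBm0 hdisj]
    refine tsum_congr fun m => ?_
    have hcong : ∫⁻ ω in A ∩ X n ⁻¹' {m}, g (X n ω) (Z ω) ∂μ
        = ∫⁻ ω in A ∩ X n ⁻¹' {m}, g m (Z ω) ∂μ := by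
      refine setLIntegral_congr_fun (hBm0 m) (fun ω hω => ?_)
      rw [Set.mem_singleton_iff.1 hω.2]
    rw [hcong]
    have hmf : Measurable[MeasurableSpace.comap Z MeasurableSpace.pi]
        (fun ω => g m (Z ω)) := (hg m).comp (Measurable.of_comap_le le_rfl)
    have hind2 : IndepSets {s | MeasurableSet[MeasurableSpace.comap Z MeasurableSpace.pi] s}
        {A ∩ X n ⁻¹' {m}} μ := by
      rw [IndepSets_iff]
      intro t1 t2 ht1 ht2
      rw [Set.mem_singleton_iff] at ht2; subst ht2
      exact (Indep_iff _ _ μ).1 (hindep n) t1 _ ht1 (hBF m)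
    have hprod := lintegral_mul_indicator_eq_lintegral_mul_lintegral_indicator
      (measurable_iff_comap_le.1 hZm) (1:ℝ≥0∞) (hBm0 m) hind2 hmf
    have e1 : ∀ ω, (A ∩ X n ⁻¹' {m}).indicator (fun ω' => g m (Z ω')) ω
        = g m (Z ω) * (A ∩ X n ⁻¹' {m}).indicator (fun _ => (1:ℝ≥0∞)) ω := by
      intro ω
      by_cases h : ω ∈ A ∩ X n ⁻¹' {m} <;> simp [h]
    rw [← lintegral_indicator (hBm0 m), lintegral_congr e1, hprod]
    have : ∫⁻ ω, (A ∩ X n ⁻¹' {m}).indicator (fun _ => (1:ℝ≥0∞)) ω ∂μ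
        = μ (A ∩ X n ⁻¹' {m}) := by
      rw [lintegral_indicator (hBm0 m)]
      simp
    rw [this, mul_comm]
  -- single-variable pgf
  have hFY : ∀ (s : ℝ), 0 ≤ s → s ≤ 1 → ∀ (n i : ℕ),
      ∫⁻ ω, (ENNReal.ofReal s) ^ (Y (n+1) i ω) ∂μ = ENNReal.ofReal (gwphi N s) := by
    intro s hs0 hs1 n i
    have h0 := hV (Y (n+1) i) (hYm _ _) Set.univ MeasurableSet.univ
      (fun j => (ENNReal.ofReal s)^j)
    rw [Measure.restrict_univ] at h0
    rw [h0]
    have hterm : ∀ j : ℕ, μ (Set.univ ∩ Y (n+1) i ⁻¹' {j}) * (ENNReal.ofReal s)^j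
        = ENNReal.ofReal ((((2*N).choose j : ℝ) * p^j * (1-p)^(2*N-j)) * s^j) := by
      intro j
      rw [Set.univ_inter]
      have hpre : Y (n+1) i ⁻¹' {j} = {ω | Y (n+1) i ω = j} := rfl
      rw [hpre, hpmf n i j, ← ENNReal.ofReal_pow hs0, ← ENNReal.ofReal_mul
        (by positivity)]
    rw [tsum_congr hterm]
    rw [tsum_eq_sum (s := Finset.range (2*N+1)) (fun j hj => by
      have hlt : 2*N < j := by simpa using Finset.mem_range.not.1 hj
      rw [Nat.choose_eq_zero_of_lt hlt]
      simp)]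
    rw [← ENNReal.ofReal_sum_of_nonneg (fun j _ => by positivity)]
    congr 1
    have := gw_pgf_sum (2*N) p (1-p) s
    rw [this]
    rw [gwphi, ← hp]
  -- single-variable mean
  have hEY : ∀ (n i : ℕ), ∫⁻ ω, ((Y (n+1) i ω : ℕ) : ℝ≥0∞) ∂μ = 1 := by
    intro n i
    have h0 := hV (Y (n+1) i) (hYm _ _) Set.univ MeasurableSet.univ
      (fun j => (j : ℝ≥0∞))
    rw [Measure.restrict_univ] at h0
    rw [h0]
    have hterm : ∀ j : ℕ, μ (Set.univ ∩ Y (n+1) i ⁻¹' {j}) * (j : ℝ≥0∞)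
        = ENNReal.ofReal ((j:ℝ) * (((2*N).choose j : ℝ) * p^j * (1-p)^(2*N-j))) := by
      intro j
      rw [Set.univ_inter]
      have hpre : Y (n+1) i ⁻¹' {j} = {ω | Y (n+1) i ω = j} := rfl
      rw [hpre, hpmf n i j, ← ENNReal.ofReal_natCast j, ← ENNReal.ofReal_mul
        (by positivity), mul_comm]
    rw [tsum_congr hterm]
    rw [tsum_eq_sum (s := Finset.range (2*N+1)) (fun j hj => by
      have hlt : 2*N < j := by simpa using Finset.mem_range.not.1 hj
      rw [Nat.choose_eq_zero_of_lt hlt]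
      simp)]
    rw [← ENNReal.ofReal_sum_of_nonneg (fun j _ => by positivity)]
    obtain ⟨M, hM2⟩ : ∃ M, 2*N = M + 1 := ⟨2*N - 1, by omega⟩
    have : ∑ j ∈ Finset.range (2*N+1), (j:ℝ) * (((2*N).choose j : ℝ) * p^j * (1-p)^(2*N-j)) = 1 := by
      rw [hM2]
      rw [gw_mean_sum M p (1-p)]
      have : p + (1-p) = 1 := by ring
      rw [this, one_pow, mul_one]
      have hMc : ((M:ℝ)+1) = 2*(N:ℝ) := by
        have : ((M+1 : ℕ) : ℝ) = ((2*N : ℕ) : ℝ) := by rw [← hM2]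
        push_cast at this
        linarith
      rw [hMc, hp]
      field_simp
    rw [this]
    simp
  -- pgf of sums of the Y's
  have hpowsum : ∀ (n : ℕ) (s : ℝ), 0 ≤ s → s ≤ 1 → ∀ m : ℕ,
      ∫⁻ ω, (ENNReal.ofReal s) ^ (∑ i ∈ Finset.range m, Y (n+1) i ω) ∂μ
        = (ENNReal.ofReal (gwphi N s)) ^ m := by
    intro n s hs0 hs1 m
    induction m with
    | zero => simp
    | succ m ih =>
      have hind : IndepFun (∑ j ∈ Finset.range m, Y (n+1) j) (Y (n+1) m) μ :=
        (hiid n).indepFun_sum_range_succ (fun i => hYm (n+1) i) m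
      have hcomp : IndepFun (fun ω => (ENNReal.ofReal s) ^ (∑ i ∈ Finset.range m, Y (n+1) i ω))
          (fun ω => (ENNReal.ofReal s) ^ (Y (n+1) m ω)) μ := by
        have h2 := hind.comp (φ := fun t : ℕ => (ENNReal.ofReal s)^t)
          (ψ := fun t : ℕ => (ENNReal.ofReal s)^t) measurable_from_top measurable_from_top
        have e : ((fun t : ℕ => (ENNReal.ofReal s)^t) ∘ (∑ j ∈ Finset.range m, Y (n+1) j))
            = fun ω => (ENNReal.ofReal s) ^ (∑ i ∈ Finset.range m, Y (n+1) i ω) := by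
          funext ω
          simp [Function.comp, Finset.sum_apply]
        rw [e] at h2
        exact h2
      have hmsum : Measurable fun ω => (ENNReal.ofReal s) ^ (∑ i ∈ Finset.range m, Y (n+1) i ω) :=
        measurable_from_top.comp (Finset.measurable_sum _ (fun i _ => hYm (n+1) i))
      have hmy : Measurable fun ω => (ENNReal.ofReal s) ^ (Y (n+1) m ω) :=
        measurable_from_top.comp (hYm (n+1) m)
      calc ∫⁻ ω, (ENNReal.ofReal s) ^ (∑ i ∈ Finset.range (m+1), Y (n+1) i ω) ∂μ
          = ∫⁻ ω, (ENNReal.ofReal s) ^ (∑ i ∈ Finset.range m, Y (n+1) i ω)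
              * (ENNReal.ofReal s) ^ (Y (n+1) m ω) ∂μ := by
            apply lintegral_congr
            intro ω
            rw [Finset.sum_range_succ, pow_add]
        _ = (∫⁻ ω, (ENNReal.ofReal s) ^ (∑ i ∈ Finset.range m, Y (n+1) i ω) ∂μ)
              * ∫⁻ ω, (ENNReal.ofReal s) ^ (Y (n+1) m ω) ∂μ :=
            lintegral_mul_eq_lintegral_mul_lintegral_of_indepFun''
              hmsum.aemeasurable hmy.aemeasurable hcomp
        _ = (ENNReal.ofReal (gwphi N s)) ^ m * ENNReal.ofReal (gwphi N s) := by
            rw [ih, hFY s hs0 hs1 n m]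
        _ = (ENNReal.ofReal (gwphi N s)) ^ (m+1) := (pow_succ _ m).symm
  -- mean of sums of Y's
  have hEsum : ∀ (n m : ℕ),
      ∫⁻ ω, ((∑ i ∈ Finset.range m, Y (n+1) i ω : ℕ) : ℝ≥0∞) ∂μ = (m : ℝ≥0∞) := by
    intro n m
    have e : (fun ω => ((∑ i ∈ Finset.range m, Y (n+1) i ω : ℕ) : ℝ≥0∞))
        = fun ω => ∑ i ∈ Finset.range m, ((Y (n+1) i ω : ℕ) : ℝ≥0∞) := by
      funext ω; push_cast; rfl
    rw [e]
    have h2 : ∫⁻ ω, ∑ i ∈ Finset.range m, ((Y (n+1) i ω : ℕ) : ℝ≥0∞) ∂μ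
        = ∑ i ∈ Finset.range m, ∫⁻ ω, ((Y (n+1) i ω : ℕ) : ℝ≥0∞) ∂μ :=
      lintegral_finset_sum _ (fun i _ => measurable_from_top.comp (hYm (n+1) i))
    rw [h2]
    simp [hEY n]
  -- one-step conservation of conditional means
  have hstep : ∀ (n : ℕ) (A : Set Ω), MeasurableSet[ℱ n] A →
      ∫⁻ ω in A, ((X (n+1) ω : ℕ) : ℝ≥0∞) ∂μ = ∫⁻ ω in A, ((X n ω : ℕ) : ℝ≥0∞) ∂μ := by
    intro n A hA
    have hg : ∀ m : ℕ, Measurable (fun v : ℕ → ℕ => ((∑ i ∈ Finset.range m, v i : ℕ) : ℝ≥0∞)) :=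
      fun m => measurable_from_top.comp (Finset.measurable_sum _ (fun i _ => measurable_pi_apply i))
    have e : (fun ω => ((X (n+1) ω : ℕ) : ℝ≥0∞))
        = fun ω => (fun m v => ((∑ i ∈ Finset.range m, v i : ℕ) : ℝ≥0∞)) (X n ω)
            (fun i => Y (n+1) i ω) := by
      funext ω
      simp only [hrec n ω]
    rw [show (∫⁻ ω in A, ((X (n+1) ω : ℕ) : ℝ≥0∞) ∂μ)
        = ∫⁻ ω in A, (fun m v => ((∑ i ∈ Finset.range m, v i : ℕ) : ℝ≥0∞)) (X n ω)
            (fun i => Y (n+1) i ω) ∂μ from by rw [← e]]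
    rw [hM n A hA _ hg]
    rw [hV (X n) (hX n) A (ℱ.le n A hA) (fun m => (m : ℝ≥0∞))]
    refine tsum_congr fun m => ?_
    rw [hEsum n m]
  -- total expectation is 1
  have hE1 : ∀ n : ℕ, ∫⁻ ω, ((X n ω : ℕ) : ℝ≥0∞) ∂μ = 1 := by
    intro n
    induction n with
    | zero => simp [hX0]
    | succ n ih =>
      have := hstep n Set.univ MeasurableSet.univ
      rw [Measure.restrict_univ] at this
      rw [this, ih]
  -- maximal inequality
  have hmax : ∀ M : ℕ, 1 ≤ M →
      μ (⋃ j, X j ⁻¹' {x | M ≤ x}) ≤ ((M : ℝ≥0∞))⁻¹ := by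
    intro M hM1
    set B : ℕ → Set Ω := fun j =>
      X j ⁻¹' {x | M ≤ x} ∩ ⋂ i ∈ Finset.range j, X i ⁻¹' {x | x < M} with hBdef
    have hBF : ∀ j, MeasurableSet[ℱ j] (B j) := by
      intro j
      refine MeasurableSet.inter (hXF j j le_rfl _) ?_
      refine Finset.measurableSet_biInter _ (fun i hi => ?_)
      exact hXF i j (le_of_lt (Finset.mem_range.1 hi)) _
    have hBm : ∀ j, MeasurableSet (B j) := fun j => ℱ.le j _ (hBF j)
    have hBdisj : Pairwise (Function.onFun Disjoint B) := by
      intro i j hij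
      rcases lt_or_gt_of_ne hij with h | h
      · simp only [Function.onFun]
        rw [Set.disjoint_left]
        rintro ω ⟨h1, -⟩ ⟨-, h2⟩
        have h3 := Set.mem_iInter₂.1 h2 i (Finset.mem_range.2 h)
        exact absurd h1 (by simpa using h3)
      · simp only [Function.onFun]
        rw [Set.disjoint_left]
        rintro ω ⟨-, h2⟩ ⟨h1, -⟩
        have h3 := Set.mem_iInter₂.1 h2 j (Finset.mem_range.2 h)
        exact absurd h1 (by simpa using h3)
    have hcover : (⋃ j, X j ⁻¹' {x | M ≤ x}) = ⋃ j, B j := by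
      ext ω
      simp only [Set.mem_iUnion, Set.mem_preimage, Set.mem_setOf_eq, hBdef, Set.mem_inter_iff,
        Set.mem_iInter, Finset.mem_range]
      constructor
      · rintro ⟨j, hj⟩
        have hex : ∃ j, M ≤ X j ω := ⟨j, hj⟩
        refine ⟨Nat.find hex, Nat.find_spec hex, fun i hi => ?_⟩
        have := Nat.find_min hex hi
        omega
      · rintro ⟨j, hj, -⟩
        exact ⟨j, hj⟩
    -- conservation over B j
    have hkeep : ∀ j r, j ≤ r →
        ∫⁻ ω in B j, ((X r ω : ℕ) : ℝ≥0∞) ∂μ = ∫⁻ ω in B j, ((X j ω : ℕ) : ℝ≥0∞) ∂μ := by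
      intro j r hjr
      induction r, hjr using Nat.le_induction with
      | base => rfl
      | succ r hjr ih =>
        rw [← ih]
        exact hstep r (B j) (ℱ.mono hjr _ (hBF j))
    have hlow : ∀ j, (M : ℝ≥0∞) * μ (B j) ≤ ∫⁻ ω in B j, ((X j ω : ℕ) : ℝ≥0∞) ∂μ := by
      intro j
      calc (M : ℝ≥0∞) * μ (B j) = ∫⁻ _ in B j, (M : ℝ≥0∞) ∂μ := (setLIntegral_const _ _).symm
        _ ≤ ∫⁻ ω in B j, ((X j ω : ℕ) : ℝ≥0∞) ∂μ := by
            refine setLIntegral_mono (measurable_from_top.comp (hX j)) (fun ω hω => ?_)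
            have : M ≤ X j ω := hω.1
            exact_mod_cast Nat.cast_le.2 this
    have hpartial : ∀ n : ℕ, ∑ j ∈ Finset.range (n+1), (M : ℝ≥0∞) * μ (B j) ≤ 1 := by
      intro n
      have h1 : ∀ j ∈ Finset.range (n+1), (M : ℝ≥0∞) * μ (B j)
          ≤ ∫⁻ ω in B j, ((X n ω : ℕ) : ℝ≥0∞) ∂μ := by
        intro j hj
        rw [hkeep j n (Nat.lt_succ_iff.1 (Finset.mem_range.1 hj))]
        exact hlow j
      calc ∑ j ∈ Finset.range (n+1), (M : ℝ≥0∞) * μ (B j)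
          ≤ ∑ j ∈ Finset.range (n+1), ∫⁻ ω in B j, ((X n ω : ℕ) : ℝ≥0∞) ∂μ :=
            Finset.sum_le_sum h1
        _ = ∑' j : ℕ, ∫⁻ ω in (if j ∈ Finset.range (n+1) then B j else ∅),
              ((X n ω : ℕ) : ℝ≥0∞) ∂μ := by
            rw [tsum_eq_sum (s := Finset.range (n+1)) (fun j hj => by
              rw [if_neg hj]
              simp)]
            apply Finset.sum_congr rfl
            intro j hj
            rw [if_pos hj]
        _ = ∫⁻ ω in ⋃ j, (if j ∈ Finset.range (n+1) then B j else ∅),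
              ((X n ω : ℕ) : ℝ≥0∞) ∂μ := by
            rw [lintegral_iUnion (fun j => by
                split
                · exact hBm j
                · exact MeasurableSet.empty)
              (by
                intro i j hij
                have := hBdisj hij
                simp only [Function.onFun] at this ⊢
                split <;> split <;> simp [this])]
        _ ≤ ∫⁻ ω, ((X n ω : ℕ) : ℝ≥0∞) ∂μ := setLIntegral_le_lintegral _ _
        _ = 1 := hE1 n
    have htsum : ∑' j : ℕ, (M : ℝ≥0∞) * μ (B j) ≤ 1 := by
      rw [ENNReal.tsum_eq_iSup_sum' (fun n => Finset.range (n+1)) (fun t => by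
        obtain ⟨n, hn⟩ := t.exists_nat_subset_range
        exact ⟨n, hn.trans (Finset.range_subset_range.2 (Nat.le_succ n))⟩)]
      exact iSup_le hpartial
    rw [hcover]
    rw [ENNReal.le_inv_iff_mul_le, mul_comm]
    calc (M : ℝ≥0∞) * μ (⋃ j, B j) ≤ (M : ℝ≥0∞) * ∑' j, μ (B j) := by
          exact mul_le_mul_right (measure_iUnion_le B) _
      _ = ∑' j, (M : ℝ≥0∞) * μ (B j) := ENNReal.tsum_mul_left.symm
      _ ≤ 1 := htsum
  -- generating function iteration
  have hgf : ∀ (n : ℕ) (s : ℝ), 0 ≤ s → s ≤ 1 →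
      ∫⁻ ω, (ENNReal.ofReal s) ^ (X n ω) ∂μ = ENNReal.ofReal ((gwphi N)^[n] s) := by
    intro n
    induction n with
    | zero =>
      intro s hs0 hs1
      have e : (fun ω => (ENNReal.ofReal s) ^ (X 0 ω)) = fun _ => ENNReal.ofReal s := by
        funext ω; rw [hX0 ω, pow_one]
      rw [e]
      simp
    | succ n ih =>
      intro s hs0 hs1
      have hg : ∀ m : ℕ, Measurable (fun v : ℕ → ℕ =>
          (ENNReal.ofReal s) ^ (∑ i ∈ Finset.range m, v i)) :=
        fun m => measurable_from_top.comp (Finset.measurable_sum _ (fun i _ => measurable_pi_apply i))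
      have e : (fun ω => (ENNReal.ofReal s) ^ (X (n+1) ω))
          = fun ω => (fun m v => (ENNReal.ofReal s) ^ (∑ i ∈ Finset.range m, v i)) (X n ω)
              (fun i => Y (n+1) i ω) := by
        funext ω
        simp only [hrec n ω]
      have hMuniv := hM n Set.univ MeasurableSet.univ
        (fun m v => (ENNReal.ofReal s) ^ (∑ i ∈ Finset.range m, v i)) hg
      rw [Measure.restrict_univ] at hMuniv
      have h3 := hV (X n) (hX n) Set.univ MeasurableSet.univ
        (fun m => (ENNReal.ofReal (gwphi N s)) ^ m)
      rw [Measure.restrict_univ] at h3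
      have hmem := gwphi_mem N hN hs0 hs1
      calc ∫⁻ ω, (ENNReal.ofReal s) ^ (X (n+1) ω) ∂μ
          = ∫⁻ ω, (fun m v => (ENNReal.ofReal s) ^ (∑ i ∈ Finset.range m, v i)) (X n ω)
              (fun i => Y (n+1) i ω) ∂μ :=
            lintegral_congr (fun ω => by simp only [hrec n ω])
        _ = ∑' m : ℕ, μ (Set.univ ∩ X n ⁻¹' {m})
              * ∫⁻ ω, (fun m v => (ENNReal.ofReal s) ^ (∑ i ∈ Finset.range m, v i)) m
                  (fun i => Y (n+1) i ω) ∂μ := hMuniv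
        _ = ∑' m : ℕ, μ (Set.univ ∩ X n ⁻¹' {m}) * (ENNReal.ofReal (gwphi N s)) ^ m := by
            refine tsum_congr fun m => ?_
            congr 1
            simpa using hpowsum n s hs0 hs1 m
        _ = ∫⁻ ω, (ENNReal.ofReal (gwphi N s)) ^ (X n ω) ∂μ := h3.symm
        _ = ENNReal.ofReal ((gwphi N)^[n] (gwphi N s)) := ih (gwphi N s) hmem.1 hmem.2
        _ = ENNReal.ofReal ((gwphi N)^[n+1] s) := by rw [Function.iterate_succ_apply]
  -- extinction probability
  have hzero : ∀ n : ℕ, μ (X n ⁻¹' {0}) = ENNReal.ofReal ((gwphi N)^[n] 0) := by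
    intro n
    have h0 := hgf n 0 le_rfl zero_le_one
    rw [ENNReal.ofReal_zero] at h0
    have e : (fun ω => (0 : ℝ≥0∞) ^ (X n ω))
        = (X n ⁻¹' {0}).indicator (fun _ => (1:ℝ≥0∞)) := by
      funext ω
      by_cases h : X n ω = 0
      · simp [h, Set.indicator_of_mem, Set.mem_preimage]
      · rw [zero_pow h]
        rw [Set.indicator_of_notMem (by simpa using h)]
    rw [e] at h0
    rw [lintegral_indicator (hX n (measurableSet_singleton 0))] at h0
    simpa using h0
  -- survival probability bound
  have hsurv : ∀ n : ℕ, μ {ω | 1 ≤ X n ω} ≤ ENNReal.ofReal (12/((n:ℝ)+12)) := by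
    intro n
    have hcompl : {ω | 1 ≤ X n ω} = (X n ⁻¹' {0})ᶜ := by
      ext ω
      simp only [Set.mem_setOf_eq, Set.mem_compl_iff, Set.mem_preimage, Set.mem_singleton_iff]
      omega
    rw [hcompl, prob_compl_eq_one_sub (hX n (measurableSet_singleton 0)), hzero n]
    obtain ⟨hw0, hw1, hwb⟩ := gwphi_iter_bound N hN n
    calc (1 : ℝ≥0∞) - ENNReal.ofReal ((gwphi N)^[n] 0)
        ≤ ENNReal.ofReal (1 - (gwphi N)^[n] 0) := by
          rw [tsub_le_iff_right, ← ENNReal.ofReal_add (by linarith) hw0]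
          rw [show 1 - (gwphi N)^[n] 0 + (gwphi N)^[n] 0 = 1 by ring]
          simp
      _ ≤ ENNReal.ofReal (12/((n:ℝ)+12)) := ENNReal.ofReal_le_ofReal hwb
  -- zero is absorbing
  have hzstable : ∀ (ω : Ω) (a b : ℕ), X a ω = 0 → X (a+b) ω = 0 := by
    intro ω a b h0
    induction b with
    | zero => exact h0
    | succ b ih =>
      rw [show a + (b+1) = (a+b) + 1 by ring, hrec (a+b) ω, ih]
      simp
  -- the event inclusion
  have hsub : {ω | ∃ n : ℕ, 2 ^ k ≤ X n ω ∨ 2 ^ (2*k) ≤ ∑ i ∈ Finset.Icc 1 n, X i ω}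
      ⊆ (⋃ j, X j ⁻¹' {x | 2^k ≤ x}) ∪ {ω | 1 ≤ X (2^k) ω} := by
    rintro ω ⟨n, hn⟩
    by_cases hcap : ∃ j, 2^k ≤ X j ω
    · left
      obtain ⟨j, hj⟩ := hcap
      exact Set.mem_iUnion.2 ⟨j, hj⟩
    · push_neg at hcap
      rcases hn with hn | hn
      · exact absurd hn (not_le.2 (hcap n))
      · right
        by_contra h0
        simp only [Set.mem_setOf_eq] at h0
        have hX2k : X (2^k) ω = 0 := by omega
        have hzero' : ∀ i, 2^k ≤ i → X i ω = 0 := by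
          intro i hi
          have := hzstable ω (2^k) (i - 2^k) hX2k
          rwa [Nat.add_sub_cancel' hi] at this
        have hsum : ∑ i ∈ Finset.Icc 1 n, X i ω
            = ∑ i ∈ (Finset.Icc 1 n).filter (· < 2^k), X i ω := by
          symm
          apply Finset.sum_subset (Finset.filter_subset _ _)
          intro i hi hni
          have : ¬ (i < 2^k) := by
            intro hlt
            exact hni (Finset.mem_filter.2 ⟨hi, hlt⟩)
          exact hzero' i (by omega)
        have hcard : ((Finset.Icc 1 n).filter (· < 2^k)).card ≤ 2^k - 1 := by
          have hss : (Finset.Icc 1 n).filter (· < 2^k) ⊆ Finset.Icc 1 (2^k - 1) := by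
            intro i hi
            obtain ⟨hi1, hi2⟩ := Finset.mem_filter.1 hi
            have := (Finset.mem_Icc.1 hi1).1
            refine Finset.mem_Icc.2 ⟨this, by omega⟩
          calc ((Finset.Icc 1 n).filter (· < 2^k)).card ≤ (Finset.Icc 1 (2^k - 1)).card :=
              Finset.card_le_card hss
            _ = 2^k - 1 := by rw [Nat.card_Icc]; omega
        have hbound : ∑ i ∈ (Finset.Icc 1 n).filter (· < 2^k), X i ω
            ≤ (2^k - 1) * (2^k - 1) := by
          calc ∑ i ∈ (Finset.Icc 1 n).filter (· < 2^k), X i ω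
              ≤ ((Finset.Icc 1 n).filter (· < 2^k)).card * (2^k - 1) := by
                apply Finset.sum_le_card_nsmul
                intro i hi
                have := hcap i
                omega
            _ ≤ (2^k - 1) * (2^k - 1) := Nat.mul_le_mul_right _ hcard
        have h2k1 : 1 ≤ 2^k := Nat.one_le_two_pow
        have hlt : (2^k - 1) * (2^k - 1) < 2^(2*k) := by
          have e : 2^(2*k) = 2^k * 2^k := by rw [two_mul, pow_add]
          rw [e]
          calc (2^k - 1) * (2^k - 1) ≤ (2^k - 1) * 2^k :=
              mul_le_mul_of_nonneg_left (by omega) (Nat.zero_le _)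
            _ < 2^k * 2^k :=
              mul_lt_mul_of_pos_right (by omega) (by positivity)
        rw [hsum] at hn
        exact absurd (lt_of_le_of_lt (hn.trans hbound) hlt) (lt_irrefl _)
  -- final computation
  have hC : μ (⋃ j, X j ⁻¹' {x | 2^k ≤ x}) ≤ ((2^k : ℕ) : ℝ≥0∞)⁻¹ :=
    hmax (2^k) Nat.one_le_two_pow
  have hD : μ {ω | 1 ≤ X (2^k) ω} ≤ ENNReal.ofReal (12/(((2^k : ℕ):ℝ)+12)) := by
    simpa using hsurv (2^k)
  have h2kR : (0:ℝ) < (2:ℝ)^k := by positivity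
  calc μ {ω | ∃ n : ℕ, 2 ^ k ≤ X n ω ∨ 2 ^ (2*k) ≤ ∑ i ∈ Finset.Icc 1 n, X i ω}
      ≤ μ ((⋃ j, X j ⁻¹' {x | 2^k ≤ x}) ∪ {ω | 1 ≤ X (2^k) ω}) := measure_mono hsub
    _ ≤ μ (⋃ j, X j ⁻¹' {x | 2^k ≤ x}) + μ {ω | 1 ≤ X (2^k) ω} := measure_union_le _ _
    _ ≤ ((2^k : ℕ) : ℝ≥0∞)⁻¹ + ENNReal.ofReal (12/(((2^k : ℕ):ℝ)+12)) := add_le_add hC hD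
    _ ≤ ENNReal.ofReal (((2:ℝ)^k)⁻¹) + ENNReal.ofReal (12/((2:ℝ)^k)) := by
        apply add_le_add
        · rw [show ((2^k : ℕ) : ℝ≥0∞) = ENNReal.ofReal ((2:ℝ)^k) from by
            rw [← ENNReal.ofReal_natCast]; congr 1; push_cast; ring]
          rw [ENNReal.ofReal_inv_of_pos h2kR]
        · apply ENNReal.ofReal_le_ofReal
          apply div_le_div_of_nonneg_left (by norm_num) h2kR
          push_cast
          linarith
    _ ≤ ENNReal.ofReal (13 * 2 ^ (-(k : ℝ))) := by
        rw [← ENNReal.ofReal_add (by positivity) (by positivity)]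
        apply ENNReal.ofReal_le_ofReal
        rw [Real.rpow_neg (by norm_num), Real.rpow_natCast]
        rw [div_eq_mul_inv]
        linarith [inv_nonneg.2 h2kR.le]
end
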